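/- arXiv:2003.01495 — 6 statements merged into one kernel-verified Lean document; each statement's English description precedes it below -/
import Mathlib

section
/- The family F = {D_c : c ∈ ℤ/7ℤ} ∪ {D'_c : c ∈ ℤ/7ℤ} is an eternal domination family for the infinite strong grid G∞ (this is the content of the statement that the Alternating strategy eternally dominates P∞ ⊠ P∞). -/
/-- The infinite strong grid on `ℤ × ℤ`: distinct vertices are adjacent iff both
coordinates differ by at most 1. -/
def strongGridInf : SimpleGraph (ℤ × ℤ) where
  Adj p q := p ≠ q ∧ |p.1 - q.1| ≤ 1 ∧ |p.2 - q.2| ≤ 1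
  symm := by
    constructor
    intro p q h
    exact ⟨h.1.symm, by rw [abs_sub_comm]; exact h.2.1, by rw [abs_sub_comm]; exact h.2.2⟩
  loopless := by
    constructor
    intro p h
    exact h.1 rfl

/-- `S` is a dominating set of `G`: every vertex is in `S` or adjacent to a vertex of `S`. -/
def IsDomSet {V : Type*} (G : SimpleGraph V) (S : Set V) : Prop :=
  ∀ v : V, v ∈ S ∨ ∃ u ∈ S, G.Adj v u

/-- `F` is an eternal domination family for `G`. -/
def IsEternalDomFamily {V : Type*} (G : SimpleGraph V) (F : Set (Set V)) : Prop :=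
  F.Nonempty ∧ (∀ C ∈ F, IsDomSet G C) ∧
    ∀ C ∈ F, ∀ v : V, ∃ C' ∈ F, v ∈ C' ∧
      ∃ φ : C ≃ C', ∀ u : C, (φ u : V) = (u : V) ∨ G.Adj (u : V) (φ u : V)

/-- The configuration `D_c = {(i,j) : 3i + j ≡ c (mod 7)}`. -/
def Dset (c : ZMod 7) : Set (ℤ × ℤ) := {p | ((3 * p.1 + p.2 : ℤ) : ZMod 7) = c}

/-- The configuration `D'_c = {(i,j) : i + 2j ≡ c (mod 7)}`. -/
def D'set (c : ZMod 7) : Set (ℤ × ℤ) := {p | ((p.1 + 2 * p.2 : ℤ) : ZMod 7) = c}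

/-- Move table used when switching from a `D` configuration to a `D'` configuration. -/
def fmov : ZMod 7 → ℤ × ℤ := ![(0,0),(-1,1),(0,1),(1,1),(-1,-1),(0,-1),(1,-1)]

/-- Move table used when switching from a `D'` configuration to a `D` configuration. -/
def gmov : ZMod 7 → ℤ × ℤ := ![(0,0),(0,1),(1,-1),(-1,-1),(1,1),(-1,1),(0,-1)]

lemma fmov_lin : ∀ z : ZMod 7, (((fmov z).1 + 2*(fmov z).2 : ℤ) : ZMod 7) = z := by decide
lemma gmov_lin : ∀ z : ZMod 7, ((3*(gmov z).1 + (gmov z).2 : ℤ) : ZMod 7) = z := by decide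
lemma gmov_fmov : ∀ z : ZMod 7, gmov (((3*(fmov z).1 + (fmov z).2 : ℤ) : ZMod 7)) = fmov z := by decide
lemma fmov_gmov : ∀ z : ZMod 7, fmov ((((gmov z).1 + 2*(gmov z).2 : ℤ) : ZMod 7)) = gmov z := by decide
lemma fmov_bd : ∀ z : ZMod 7, |(fmov z).1| ≤ 1 ∧ |(fmov z).2| ≤ 1 := by decide
lemma gmov_bd : ∀ z : ZMod 7, |(gmov z).1| ≤ 1 ∧ |(gmov z).2| ≤ 1 := by decide
lemma fmov_zero : ∀ z : ZMod 7, fmov z = 0 → z = 0 := by decide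
lemma gmov_zero : ∀ z : ZMod 7, gmov z = 0 → z = 0 := by decide

lemma adj_add (p d : ℤ × ℤ) (hd : d ≠ 0) (h1 : |d.1| ≤ 1) (h2 : |d.2| ≤ 1) :
    strongGridInf.Adj p (p + d) := by
  refine ⟨fun h => hd ?_, ?_, ?_⟩
  · have := congrArg Prod.fst h
    have := congrArg Prod.snd h
    ext <;> simp at * <;> omega
  · show |p.1 - (p.1 + d.1)| ≤ 1
    rwa [sub_add_cancel_left, abs_neg]
  · show |p.2 - (p.2 + d.2)| ≤ 1
    rwa [sub_add_cancel_left, abs_neg]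

/-- linear form `3i+j` mod 7 of a sum. -/
lemma lin1_add (p d : ℤ × ℤ) :
    ((3*(p+d).1 + (p+d).2 : ℤ) : ZMod 7) = ((3*p.1 + p.2 : ℤ) : ZMod 7) + ((3*d.1 + d.2 : ℤ) : ZMod 7) := by
  simp only [Prod.fst_add, Prod.snd_add]
  push_cast
  ring

lemma lin2_add (p d : ℤ × ℤ) :
    (((p+d).1 + 2*(p+d).2 : ℤ) : ZMod 7) = ((p.1 + 2*p.2 : ℤ) : ZMod 7) + ((d.1 + 2*d.2 : ℤ) : ZMod 7) := by
  simp only [Prod.fst_add, Prod.snd_add]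
  push_cast
  ring

/-- The guard movement from `D_c` to `D'_{c'}` is a bijection. -/
def moveDD' (c c' : ZMod 7) : (Dset c) ≃ (D'set c') where
  toFun p := ⟨p.1 + fmov (c' - ((p.1.1 + 2*p.1.2 : ℤ) : ZMod 7)), by
    have := lin2_add p.1 (fmov (c' - ((p.1.1 + 2*p.1.2 : ℤ) : ZMod 7)))
    simp only [D'set, Set.mem_setOf_eq, this, fmov_lin]
    ring⟩
  invFun r := ⟨r.1 - gmov (((3*r.1.1 + r.1.2 : ℤ) : ZMod 7) - c), by
    have h := lin1_add (r.1 - gmov (((3*r.1.1 + r.1.2 : ℤ) : ZMod 7) - c))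
      (gmov (((3*r.1.1 + r.1.2 : ℤ) : ZMod 7) - c))
    rw [sub_add_cancel] at h
    simp only [Dset, Set.mem_setOf_eq]
    rw [gmov_lin] at h
    linear_combination -h⟩
  left_inv p := by
    apply Subtype.ext
    have hp : ((3*p.1.1 + p.1.2 : ℤ) : ZMod 7) = c := p.2
    set z := c' - ((p.1.1 + 2*p.1.2 : ℤ) : ZMod 7) with hz
    show p.1 + fmov z - gmov (((3*(p.1 + fmov z).1 + (p.1 + fmov z).2 : ℤ) : ZMod 7) - c) = p.1
    have h1 : ((3*(p.1 + fmov z).1 + (p.1 + fmov z).2 : ℤ) : ZMod 7) - c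
        = ((3*(fmov z).1 + (fmov z).2 : ℤ) : ZMod 7) := by
      rw [lin1_add, hp]; ring
    rw [h1, gmov_fmov, add_sub_cancel_right]
  right_inv r := by
    apply Subtype.ext
    have hr : ((r.1.1 + 2*r.1.2 : ℤ) : ZMod 7) = c' := r.2
    set w := ((3*r.1.1 + r.1.2 : ℤ) : ZMod 7) - c with hw
    show r.1 - gmov w + fmov (c' - (((r.1 - gmov w).1 + 2*(r.1 - gmov w).2 : ℤ) : ZMod 7)) = r.1
    have h1 : c' - (((r.1 - gmov w).1 + 2*(r.1 - gmov w).2 : ℤ) : ZMod 7)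
        = (((gmov w).1 + 2*(gmov w).2 : ℤ) : ZMod 7) := by
      have h2 := lin2_add (r.1 - gmov w) (gmov w)
      rw [sub_add_cancel, hr] at h2
      linear_combination h2
    rw [h1, fmov_gmov, sub_add_cancel]

/-- The guard movement from `D'_c` to `D_{c'}` is a bijection. -/
def moveD'D (c c' : ZMod 7) : (D'set c) ≃ (Dset c') where
  toFun p := ⟨p.1 + gmov (c' - ((3*p.1.1 + p.1.2 : ℤ) : ZMod 7)), by
    have := lin1_add p.1 (gmov (c' - ((3*p.1.1 + p.1.2 : ℤ) : ZMod 7)))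
    simp only [Dset, Set.mem_setOf_eq, this, gmov_lin]
    ring⟩
  invFun r := ⟨r.1 - fmov (((r.1.1 + 2*r.1.2 : ℤ) : ZMod 7) - c), by
    have h := lin2_add (r.1 - fmov (((r.1.1 + 2*r.1.2 : ℤ) : ZMod 7) - c))
      (fmov (((r.1.1 + 2*r.1.2 : ℤ) : ZMod 7) - c))
    rw [sub_add_cancel] at h
    simp only [D'set, Set.mem_setOf_eq]
    rw [fmov_lin] at h
    linear_combination -h⟩
  left_inv p := by
    apply Subtype.ext
    have hp : ((p.1.1 + 2*p.1.2 : ℤ) : ZMod 7) = c := p.2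
    set w := c' - ((3*p.1.1 + p.1.2 : ℤ) : ZMod 7) with hw
    show p.1 + gmov w - fmov ((((p.1 + gmov w).1 + 2*(p.1 + gmov w).2 : ℤ) : ZMod 7) - c) = p.1
    have h1 : (((p.1 + gmov w).1 + 2*(p.1 + gmov w).2 : ℤ) : ZMod 7) - c
        = (((gmov w).1 + 2*(gmov w).2 : ℤ) : ZMod 7) := by
      rw [lin2_add, hp]; ring
    rw [h1, fmov_gmov, add_sub_cancel_right]
  right_inv r := by
    apply Subtype.ext
    have hr : ((3*r.1.1 + r.1.2 : ℤ) : ZMod 7) = c' := r.2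
    set z := ((r.1.1 + 2*r.1.2 : ℤ) : ZMod 7) - c with hz
    show r.1 - fmov z + gmov (c' - ((3*(r.1 - fmov z).1 + (r.1 - fmov z).2 : ℤ) : ZMod 7)) = r.1
    have h1 : c' - ((3*(r.1 - fmov z).1 + (r.1 - fmov z).2 : ℤ) : ZMod 7)
        = ((3*(fmov z).1 + (fmov z).2 : ℤ) : ZMod 7) := by
      have h2 := lin1_add (r.1 - fmov z) (fmov z)
      rw [sub_add_cancel, hr] at h2
      linear_combination h2
    rw [h1, gmov_fmov, sub_add_cancel]

/-- The Alternating strategy eternally dominates the infinite strong grid: the family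
`{D_c : c ∈ ℤ/7ℤ} ∪ {D'_c : c ∈ ℤ/7ℤ}` is an eternal domination family for `G∞`. -/
theorem alternating_strategy_eternally_dominates_infinite_strong_grid :
    IsEternalDomFamily strongGridInf (Set.range Dset ∪ Set.range D'set) := by
  refine ⟨⟨Dset 0, Or.inl ⟨0, rfl⟩⟩, ?_, ?_⟩
  · rintro C (⟨c, rfl⟩ | ⟨c, rfl⟩) v
    · by_cases hv : v ∈ Dset c
      · exact Or.inl hv
      · set w := c - ((3*v.1 + v.2 : ℤ) : ZMod 7) with hw
        refine Or.inr ⟨v + gmov w, ?_, ?_⟩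
        · show ((3*(v + gmov w).1 + (v + gmov w).2 : ℤ) : ZMod 7) = c
          rw [lin1_add, gmov_lin]; ring
        · refine adj_add v (gmov w) (fun h => hv ?_) (gmov_bd w).1 (gmov_bd w).2
          have : w = 0 := gmov_zero w h
          have : ((3*v.1 + v.2 : ℤ) : ZMod 7) = c := by
            rw [hw] at this; linear_combination -this
          exact this
    · by_cases hv : v ∈ D'set c
      · exact Or.inl hv
      · set w := c - ((v.1 + 2*v.2 : ℤ) : ZMod 7) with hw
        refine Or.inr ⟨v + fmov w, ?_, ?_⟩
        · show (((v + fmov w).1 + 2*(v + fmov w).2 : ℤ) : ZMod 7) = c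
          rw [lin2_add, fmov_lin]; ring
        · refine adj_add v (fmov w) (fun h => hv ?_) (fmov_bd w).1 (fmov_bd w).2
          have : w = 0 := fmov_zero w h
          have : ((v.1 + 2*v.2 : ℤ) : ZMod 7) = c := by
            rw [hw] at this; linear_combination -this
          exact this
  · rintro C (⟨c, rfl⟩ | ⟨c, rfl⟩) v
    · refine ⟨D'set ((v.1 + 2*v.2 : ℤ) : ZMod 7), Or.inr ⟨_, rfl⟩, rfl, moveDD' c _, ?_⟩
      intro u
      set z := ((v.1 + 2*v.2 : ℤ) : ZMod 7) - ((u.1.1 + 2*u.1.2 : ℤ) : ZMod 7) with hz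
      show (u.1 + fmov z = u.1) ∨ _
      by_cases h : fmov z = 0
      · left; rw [h, add_zero]
      · right
        exact adj_add u.1 (fmov z) h (fmov_bd z).1 (fmov_bd z).2
    · refine ⟨Dset ((3*v.1 + v.2 : ℤ) : ZMod 7), Or.inl ⟨_, rfl⟩, rfl, moveD'D c _, ?_⟩
      intro u
      set z := ((3*v.1 + v.2 : ℤ) : ZMod 7) - ((3*u.1.1 + u.1.2 : ℤ) : ZMod 7) with hz
      show (u.1 + gmov z = u.1) ∨ _
      by_cases h : gmov z = 0
      · left; rw [h, add_zero]
      · right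
        exact adj_add u.1 (gmov z) h (gmov_bd z).1 (gmov_bd z).2
end

section
/- For every c ∈ ℤ/7ℤ and every vertex v = (x,y) ∈ ℤ × ℤ, setting c' = x + 2y (mod 7) (so that v ∈ D'_{c'}), there exists a bijection φ : D_c → D'_{c'} such that for every u ∈ D_c, either φ(u) = u or φ(u) is adjacent to u in the infinite strong grid G∞. In other words, from any configuration D_c the guards can move, each staying in place or moving to an adjacent vertex, into a configuration D'_{c'} containing the attacked vertex v. -/
/-- Offsets (each coordinate in {-1,0,1}) used by the guards. -/
def guardOff : ZMod 7 → ℤ × ℤ := ![(0,0),(-1,1),(0,1),(1,1),(-1,-1),(0,-1),(1,-1)]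

/-- Inverse of `t ↦ 3a+b` where `(a,b) = guardOff t`. -/
def guardGinv : ZMod 7 → ZMod 7 := ![0,2,6,4,3,1,5]

lemma guardOff_lin1 : ∀ t : ZMod 7,
    (((guardOff t).1 + 2*(guardOff t).2 : ℤ) : ZMod 7) = t := by decide

lemma guardOff_g_ginv : ∀ s : ZMod 7,
    ((3*(guardOff (guardGinv s)).1 + (guardOff (guardGinv s)).2 : ℤ) : ZMod 7) = s := by decide

lemma guardGinv_g : ∀ t : ZMod 7,
    guardGinv (((3*(guardOff t).1 + (guardOff t).2 : ℤ) : ZMod 7)) = t := by decide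

lemma guardOff_abs : ∀ t : ZMod 7, |(guardOff t).1| ≤ 1 ∧ |(guardOff t).2| ≤ 1 := by decide


set_option maxHeartbeats 800000 in
/-- From any configuration `D_c`, after an attack at `v = (x,y)` the guards can move —
each staying in place or moving to an adjacent vertex — into the configuration
`D'_{c'}` with `c' = x + 2y (mod 7)`, which contains the attacked vertex. -/
theorem move_Dset_to_D'set (c : ZMod 7) (x y : ℤ) :
    (x, y) ∈ D'set ((x + 2 * y : ℤ) : ZMod 7) ∧
      ∃ φ : (Dset c) ≃ (D'set ((x + 2 * y : ℤ) : ZMod 7)),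
        ∀ u : Dset c, (φ u : ℤ × ℤ) = (u : ℤ × ℤ) ∨
          strongGridInf.Adj (u : ℤ × ℤ) (φ u : ℤ × ℤ) := by
  set c' : ZMod 7 := ((x + 2 * y : ℤ) : ZMod 7) with hc'
  refine ⟨rfl, ?_⟩
  -- the equivalence
  refine ⟨⟨
    fun p => ⟨(p.1.1 + (guardOff (c' - ((p.1.1 + 2*p.1.2 : ℤ) : ZMod 7))).1,
              p.1.2 + (guardOff (c' - ((p.1.1 + 2*p.1.2 : ℤ) : ZMod 7))).2), ?_⟩,
    fun q => ⟨(q.1.1 - (guardOff (guardGinv (((3*q.1.1 + q.1.2 : ℤ) : ZMod 7) - c))).1,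
              q.1.2 - (guardOff (guardGinv (((3*q.1.1 + q.1.2 : ℤ) : ZMod 7) - c))).2), ?_⟩,
    ?_, ?_⟩, ?_⟩
  · -- toFun lands in D'set c'
    obtain ⟨⟨i, j⟩, hp⟩ := p
    have h := guardOff_lin1 (c' - ((i + 2*j : ℤ) : ZMod 7))
    show (((i + _) + 2*(j + _) : ℤ) : ZMod 7) = c'
    push_cast at h ⊢
    linear_combination h
  · -- invFun lands in Dset c
    obtain ⟨⟨i, j⟩, hq⟩ := q
    have h := guardOff_g_ginv (((3*i + j : ℤ) : ZMod 7) - c)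
    show ((3*(i - _) + (j - _) : ℤ) : ZMod 7) = c
    push_cast at h ⊢
    linear_combination -h
  · -- left inverse
    rintro ⟨⟨i, j⟩, hp⟩
    simp only [Dset, Set.mem_setOf_eq] at hp
    have key : (((3*(i + (guardOff (c' - ((i + 2*j : ℤ) : ZMod 7))).1) +
        (j + (guardOff (c' - ((i + 2*j : ℤ) : ZMod 7))).2) : ℤ)) : ZMod 7) - c
        = ((3*(guardOff (c' - ((i + 2*j : ℤ) : ZMod 7))).1 +
           (guardOff (c' - ((i + 2*j : ℤ) : ZMod 7))).2 : ℤ) : ZMod 7) := by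
      push_cast at hp ⊢
      linear_combination hp
    ext <;> · simp only [key, guardGinv_g]; ring
  · -- right inverse
    rintro ⟨⟨i, j⟩, hq⟩
    simp only [D'set, Set.mem_setOf_eq] at hq
    set t := guardGinv (((3*i + j : ℤ) : ZMod 7) - c) with ht
    have key : c' - (((i - (guardOff t).1) + 2*(j - (guardOff t).2) : ℤ) : ZMod 7) = t := by
      have h := guardOff_lin1 t
      push_cast at h ⊢
      rw [← hq]
      push_cast
      linear_combination h
    ext <;> · simp only [← ht, key]; ring
  · -- movement condition
    rintro ⟨⟨i, j⟩, hp⟩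
    set t := c' - ((i + 2*j : ℤ) : ZMod 7) with htd
    by_cases h0 : guardOff t = (0, 0)
    · left
      show ((i + (guardOff t).1, j + (guardOff t).2) : ℤ × ℤ) = (i, j)
      rw [h0]; ext <;> simp
    · right
      have habs := guardOff_abs t
      refine ⟨?_, ?_, ?_⟩
      · intro h
        apply h0
        have h1 : i = i + (guardOff t).1 := congrArg Prod.fst h
        have h2 : j = j + (guardOff t).2 := congrArg Prod.snd h
        have e1 : (guardOff t).1 = 0 := by omega
        have e2 : (guardOff t).2 = 0 := by omega
        exact Prod.ext_iff.mpr ⟨e1, e2⟩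
      · show |i - (i + (guardOff t).1)| ≤ 1
        have := habs.1
        rw [abs_le] at *
        omega
      · show |j - (j + (guardOff t).2)| ≤ 1
        have := habs.2
        rw [abs_le] at *
        omega
end

section
/- For every c ∈ ℤ/7ℤ and every vertex v = (x,y) ∈ ℤ × ℤ, setting c' = 3x + y (mod 7) (so that v ∈ D_{c'}), there exists a bijection φ : D'_c → D_{c'} such that for every u ∈ D'_c, either φ(u) = u or φ(u) is adjacent to u in the infinite strong grid G∞. In other words, from any configuration D'_c the guards can move, each staying in place or moving to an adjacent vertex, into a configuration D_{c'} containing the attacked vertex v. -/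
/-- Guard displacement as a function of the needed residue shift `s`:
`sh s = (a, b)` with `a, b ∈ {-1,0,1}` and `3a + b ≡ s (mod 7)`,
chosen so that `s ↦ a + 2b (mod 7)` is a permutation. -/
def sh : ZMod 7 → ℤ × ℤ :=
  ![(0,0),(0,1),(1,-1),(-1,-1),(1,1),(-1,1),(0,-1)]

/-- Inverse of the permutation `s ↦ (sh s).1 + 2 * (sh s).2 (mod 7)`. -/
def σfn : ZMod 7 → ZMod 7 := ![0,5,1,4,3,6,2]

lemma sh_L1 : ∀ s : ZMod 7, ((3*(sh s).1 + (sh s).2 : ℤ) : ZMod 7) = s := by decide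
lemma sh_L2 : ∀ s : ZMod 7, σfn (((sh s).1 + 2*(sh s).2 : ℤ) : ZMod 7) = s := by decide
lemma sh_L2' : ∀ s : ZMod 7, (((sh (σfn s)).1 + 2*(sh (σfn s)).2 : ℤ) : ZMod 7) = s := by decide
lemma sh_L3 : ∀ s : ZMod 7, |(sh s).1| ≤ 1 ∧ |(sh s).2| ≤ 1 := by decide

/-- Forward guard move: shift each point of `D'_c` by `sh` of the needed residue. -/
def fmap (c' : ZMod 7) (p : ℤ × ℤ) : ℤ × ℤ :=
  (p.1 + (sh (c' - ((3*p.1 + p.2 : ℤ) : ZMod 7))).1,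
   p.2 + (sh (c' - ((3*p.1 + p.2 : ℤ) : ZMod 7))).2)

/-- Inverse guard move. -/
def gmap (c : ZMod 7) (q : ℤ × ℤ) : ℤ × ℤ :=
  (q.1 - (sh (σfn (((q.1 + 2*q.2 : ℤ) : ZMod 7) - c))).1,
   q.2 - (sh (σfn (((q.1 + 2*q.2 : ℤ) : ZMod 7) - c))).2)

lemma fmap_mem (c' : ZMod 7) (p : ℤ × ℤ) : fmap c' p ∈ Dset c' := by
  set s : ZMod 7 := c' - ((3*p.1 + p.2 : ℤ) : ZMod 7) with hs
  show ((3 * (fmap c' p).1 + (fmap c' p).2 : ℤ) : ZMod 7) = c'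
  have h : (3 * (fmap c' p).1 + (fmap c' p).2 : ℤ)
      = (3*p.1 + p.2) + (3*(sh s).1 + (sh s).2) := by
    simp only [fmap, ← hs]; ring
  rw [h, Int.cast_add, sh_L1 s, hs]; ring

lemma gmap_mem (c : ZMod 7) (q : ℤ × ℤ) : gmap c q ∈ D'set c := by
  set s : ZMod 7 := σfn (((q.1 + 2*q.2 : ℤ) : ZMod 7) - c) with hs
  show (((gmap c q).1 + 2 * (gmap c q).2 : ℤ) : ZMod 7) = c
  have h : ((gmap c q).1 + 2 * (gmap c q).2 : ℤ)
      = (q.1 + 2*q.2) - ((sh s).1 + 2*(sh s).2) := by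
    simp only [gmap, ← hs]; ring
  rw [h, Int.cast_sub, hs, sh_L2']; ring

lemma gmap_fmap (c c' : ZMod 7) (p : ℤ × ℤ) (hp : p ∈ D'set c) :
    gmap c (fmap c' p) = p := by
  have hp' : ((p.1 + 2 * p.2 : ℤ) : ZMod 7) = c := hp
  set s : ZMod 7 := c' - ((3*p.1 + p.2 : ℤ) : ZMod 7) with hs
  have h1 : ((fmap c' p).1 + 2*(fmap c' p).2 : ℤ)
      = (p.1 + 2*p.2) + ((sh s).1 + 2*(sh s).2) := by
    simp only [fmap, ← hs]; ring
  have h2 : (((fmap c' p).1 + 2*(fmap c' p).2 : ℤ) : ZMod 7) - c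
      = (((sh s).1 + 2*(sh s).2 : ℤ) : ZMod 7) := by
    rw [h1, Int.cast_add, hp']; ring
  have h3 : σfn ((((fmap c' p).1 + 2*(fmap c' p).2 : ℤ) : ZMod 7) - c) = s := by
    rw [h2, sh_L2]
  simp only [gmap, h3]
  simp only [fmap, ← hs]
  ext <;> simp

lemma fmap_gmap (c c' : ZMod 7) (q : ℤ × ℤ) (hq : q ∈ Dset c') :
    fmap c' (gmap c q) = q := by
  have hq' : ((3 * q.1 + q.2 : ℤ) : ZMod 7) = c' := hq
  set s : ZMod 7 := σfn (((q.1 + 2*q.2 : ℤ) : ZMod 7) - c) with hs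
  have h1 : (3*(gmap c q).1 + (gmap c q).2 : ℤ)
      = (3*q.1 + q.2) - (3*(sh s).1 + (sh s).2) := by
    simp only [gmap, ← hs]; ring
  have h2 : c' - ((3*(gmap c q).1 + (gmap c q).2 : ℤ) : ZMod 7) = s := by
    rw [h1, Int.cast_sub, hq', sh_L1]; ring
  simp only [fmap]
  rw [h2]
  simp only [gmap, ← hs]
  ext <;> simp

/-- From any configuration `D'_c`, after an attack at `v = (x,y)` the guards can move —
each staying in place or moving to an adjacent vertex — into the configuration
`D_{c'}` with `c' = 3x + y (mod 7)`, which contains the attacked vertex. -/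
theorem move_D'set_to_Dset (c : ZMod 7) (x y : ℤ) :
    (x, y) ∈ Dset ((3 * x + y : ℤ) : ZMod 7) ∧
      ∃ φ : (D'set c) ≃ (Dset ((3 * x + y : ℤ) : ZMod 7)),
        ∀ u : D'set c, (φ u : ℤ × ℤ) = (u : ℤ × ℤ) ∨
          strongGridInf.Adj (u : ℤ × ℤ) (φ u : ℤ × ℤ) := by
  set c' : ZMod 7 := ((3 * x + y : ℤ) : ZMod 7) with hc'
  refine ⟨rfl, ⟨{
    toFun := fun u => ⟨fmap c' u, fmap_mem c' u⟩
    invFun := fun w => ⟨gmap c w, gmap_mem c w⟩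
    left_inv := fun u => Subtype.ext (gmap_fmap c c' u u.2)
    right_inv := fun w => Subtype.ext (fmap_gmap c c' w w.2) }, ?_⟩⟩
  intro u
  by_cases h : fmap c' (u : ℤ × ℤ) = (u : ℤ × ℤ)
  · exact Or.inl h
  · refine Or.inr ⟨fun he => h he.symm, ?_, ?_⟩
    · have := (sh_L3 (c' - ((3*(u:ℤ×ℤ).1 + (u:ℤ×ℤ).2 : ℤ) : ZMod 7))).1
      simp only [fmap]
      simpa [abs_sub_comm] using this
    · have := (sh_L3 (c' - ((3*(u:ℤ×ℤ).1 + (u:ℤ×ℤ).2 : ℤ) : ZMod 7))).2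
      simp only [fmap]
      simpa [abs_sub_comm] using this
end

section
/- (Attack at (i+1,j−1), Table 1.) Let c ∈ ℤ/7ℤ and let (i,j) ∈ ℤ × ℤ satisfy 3i + j ≡ c (mod 7), and set c' = (i+1) + 2(j−1) (mod 7). Then: (a) the seven points (i,j), (i+2,j+1), (i+1,j+4), (i−1,j+3), (i−3,j+2), (i−2,j−1), (i−4,j+5) all lie in D_c and, together with all their translates by vectors (7a,7b) with a,b ∈ ℤ, they exhaust D_c, each element of D_c arising exactly once; (b) the map φ that sends, for all a,b ∈ ℤ, (i,j)+(7a,7b) ↦ (i+1,j−1)+(7a,7b), (i+2,j+1)+(7a,7b) ↦ (i+2,j+2)+(7a,7b), (i+1,j+4)+(7a,7b) ↦ (i,j+3)+(7a,7b), (i−1,j+3)+(7a,7b) ↦ (i−2,j+4)+(7a,7b), (i−3,j+2)+(7a,7b) ↦ (i−3,j+1)+(7a,7b), (i−2,j−1)+(7a,7b) ↦ (i−1,j)+(7a,7b), and fixes every translate (i−4,j+5)+(7a,7b) (the anchors), is a well-defined bijection from D_c onto D'_{c'}; (c) every u ∈ D_c satisfies φ(u) = u or φ(u) adjacent to u in G∞;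 in particular the attacked vertex (i+1,j−1) ∈ D'_{c'} is occupied after the move. -/
set_option maxHeartbeats 1000000

/-- the move function keyed on first-coordinate residue -/
def fmove (i : ℤ) (u : ℤ × ℤ) : ℤ × ℤ :=
  if (u.1 - i) % 7 = 0 then (u.1 + 1, u.2 - 1)
  else if (u.1 - i) % 7 = 2 then (u.1, u.2 + 1)
  else if (u.1 - i) % 7 = 1 then (u.1 - 1, u.2 - 1)
  else if (u.1 - i) % 7 = 6 then (u.1 - 1, u.2 + 1)
  else if (u.1 - i) % 7 = 4 then (u.1, u.2 - 1)
  else if (u.1 - i) % 7 = 5 then (u.1 + 1, u.2 + 1)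
  else u


/-- Table 1, attack at `(i+1, j−1)`: the seven listed guards (the last being the anchor) and their
translates by `(7a,7b)` tile `D_c` exactly; the indicated moves define a bijection
`f : D_c → D'_{c'}` with `c' = (i + 1) + 2 * (j - 1) (mod 7)`, each guard staying in place or moving to an
adjacent vertex, and the attacked vertex `(i+1, j−1)` lies in `D'_{c'}`, hence is occupied. -/
theorem attack_diag_down (c : ZMod 7) (i j : ℤ)
    (hij : ((3 * i + j : ℤ) : ZMod 7) = c)
    (pts tgt : Fin 7 → ℤ × ℤ)
    (hpts : pts = ![(i, j), (i + 2, j + 1), (i + 1, j + 4), (i - 1, j + 3), (i - 3, j + 2), (i - 2, j - 1), (i - 4, j + 5)])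
    (htgt : tgt = ![(i + 1, j - 1), (i + 2, j + 2), (i, j + 3), (i - 2, j + 4), (i - 3, j + 1), (i - 1, j), (i - 4, j + 5)]) :
    (∀ k : Fin 7, pts k ∈ Dset c) ∧
    (∀ u ∈ Dset c, ∃! q : Fin 7 × ℤ × ℤ, u = pts q.1 + (7 * q.2.1, 7 * q.2.2)) ∧
    ∃ f : ℤ × ℤ → ℤ × ℤ,
      (∀ k : Fin 7, ∀ a b : ℤ, f (pts k + (7 * a, 7 * b)) = tgt k + (7 * a, 7 * b)) ∧
      Set.BijOn f (Dset c) (D'set (((i + 1) + 2 * (j - 1) : ℤ) : ZMod 7)) ∧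
      (∀ u ∈ Dset c, f u = u ∨ strongGridInf.Adj u (f u)) ∧
      ((i + 1, j - 1)) ∈ D'set (((i + 1) + 2 * (j - 1) : ℤ) : ZMod 7) := by
  have hD : ∀ u : ℤ × ℤ, u ∈ Dset c ↔ (7:ℤ) ∣ 3*(u.1-i)+(u.2-j) := by
    intro u
    rw [Dset, Set.mem_setOf_eq, ← hij, ZMod.intCast_eq_intCast_iff, Int.modEq_iff_dvd]
    push_cast
    omega
  have hD' : ∀ u : ℤ × ℤ, u ∈ D'set (((i + 1) + 2 * (j - 1) : ℤ) : ZMod 7) ↔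
      (7:ℤ) ∣ (u.1-i) + 2*(u.2-j) + 1 := by
    intro u
    rw [D'set, Set.mem_setOf_eq, ZMod.intCast_eq_intCast_iff, Int.modEq_iff_dvd]
    push_cast
    omega
  subst hpts htgt
  have hP0 : (![(i, j), (i + 2, j + 1), (i + 1, j + 4), (i - 1, j + 3), (i - 3, j + 2), (i - 2, j - 1), (i - 4, j + 5)] : Fin 7 → ℤ × ℤ) (0 : Fin 7) = (i, j) := rfl
  have hP1 : (![(i, j), (i + 2, j + 1), (i + 1, j + 4), (i - 1, j + 3), (i - 3, j + 2), (i - 2, j - 1), (i - 4, j + 5)] : Fin 7 → ℤ × ℤ) (1 : Fin 7) = (i + 2, j + 1) := rfl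
  have hP2 : (![(i, j), (i + 2, j + 1), (i + 1, j + 4), (i - 1, j + 3), (i - 3, j + 2), (i - 2, j - 1), (i - 4, j + 5)] : Fin 7 → ℤ × ℤ) (2 : Fin 7) = (i + 1, j + 4) := rfl
  have hP3 : (![(i, j), (i + 2, j + 1), (i + 1, j + 4), (i - 1, j + 3), (i - 3, j + 2), (i - 2, j - 1), (i - 4, j + 5)] : Fin 7 → ℤ × ℤ) (3 : Fin 7) = (i - 1, j + 3) := rfl
  have hP4 : (![(i, j), (i + 2, j + 1), (i + 1, j + 4), (i - 1, j + 3), (i - 3, j + 2), (i - 2, j - 1), (i - 4, j + 5)] : Fin 7 → ℤ × ℤ) (4 : Fin 7) = (i - 3, j + 2) := rfl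
  have hP5 : (![(i, j), (i + 2, j + 1), (i + 1, j + 4), (i - 1, j + 3), (i - 3, j + 2), (i - 2, j - 1), (i - 4, j + 5)] : Fin 7 → ℤ × ℤ) (5 : Fin 7) = (i - 2, j - 1) := rfl
  have hP6 : (![(i, j), (i + 2, j + 1), (i + 1, j + 4), (i - 1, j + 3), (i - 3, j + 2), (i - 2, j - 1), (i - 4, j + 5)] : Fin 7 → ℤ × ℤ) (6 : Fin 7) = (i - 4, j + 5) := rfl
  have hT0 : (![(i + 1, j - 1), (i + 2, j + 2), (i, j + 3), (i - 2, j + 4), (i - 3, j + 1), (i - 1, j), (i - 4, j + 5)] : Fin 7 → ℤ × ℤ) (0 : Fin 7) = (i + 1, j - 1) := rfl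
  have hT1 : (![(i + 1, j - 1), (i + 2, j + 2), (i, j + 3), (i - 2, j + 4), (i - 3, j + 1), (i - 1, j), (i - 4, j + 5)] : Fin 7 → ℤ × ℤ) (1 : Fin 7) = (i + 2, j + 2) := rfl
  have hT2 : (![(i + 1, j - 1), (i + 2, j + 2), (i, j + 3), (i - 2, j + 4), (i - 3, j + 1), (i - 1, j), (i - 4, j + 5)] : Fin 7 → ℤ × ℤ) (2 : Fin 7) = (i, j + 3) := rfl
  have hT3 : (![(i + 1, j - 1), (i + 2, j + 2), (i, j + 3), (i - 2, j + 4), (i - 3, j + 1), (i - 1, j), (i - 4, j + 5)] : Fin 7 → ℤ × ℤ) (3 : Fin 7) = (i - 2, j + 4) := rfl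
  have hT4 : (![(i + 1, j - 1), (i + 2, j + 2), (i, j + 3), (i - 2, j + 4), (i - 3, j + 1), (i - 1, j), (i - 4, j + 5)] : Fin 7 → ℤ × ℤ) (4 : Fin 7) = (i - 3, j + 1) := rfl
  have hT5 : (![(i + 1, j - 1), (i + 2, j + 2), (i, j + 3), (i - 2, j + 4), (i - 3, j + 1), (i - 1, j), (i - 4, j + 5)] : Fin 7 → ℤ × ℤ) (5 : Fin 7) = (i - 1, j) := rfl
  have hT6 : (![(i + 1, j - 1), (i + 2, j + 2), (i, j + 3), (i - 2, j + 4), (i - 3, j + 1), (i - 1, j), (i - 4, j + 5)] : Fin 7 → ℤ × ℤ) (6 : Fin 7) = (i - 4, j + 5) := rfl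
  refine ⟨?_, ?_, fmove i, ?_, ⟨?_, ?_, ?_⟩, ?_, ?_⟩
  · -- (a) the seven points lie in Dset c
    intro k
    fin_cases k <;> rw [hD] <;> simp [hP0, hP1, hP2, hP3, hP4, hP5, hP6, hT0, hT1, hT2, hT3, hT4, hT5, hT6, Matrix.cons_val_succ] <;> omega
  · -- unique decomposition
    intro u hu
    rw [hD] at hu
    have h7 : (u.1 - i) % 7 = 0 ∨ (u.1 - i) % 7 = 1 ∨ (u.1 - i) % 7 = 2 ∨ (u.1 - i) % 7 = 3 ∨
        (u.1 - i) % 7 = 4 ∨ (u.1 - i) % 7 = 5 ∨ (u.1 - i) % 7 = 6 := by omega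
    rcases h7 with h|h|h|h|h|h|h
    · refine ⟨⟨0, (u.1 - i)/7, (u.2 - j)/7⟩, ?_, ?_⟩
      · simp [hP0, hP1, hP2, hP3, hP4, hP5, hP6, hT0, hT1, hT2, hT3, hT4, hT5, hT6, Matrix.cons_val_succ, Prod.ext_iff]; omega
      · rintro ⟨k', a', b'⟩ h'
        fin_cases k' <;> simp [hP0, hP1, hP2, hP3, hP4, hP5, hP6, hT0, hT1, hT2, hT3, hT4, hT5, hT6, Matrix.cons_val_succ, Prod.ext_iff] at h' ⊢ <;> omega
    · refine ⟨⟨2, (u.1 - (i+1))/7, (u.2 - (j+4))/7⟩, ?_, ?_⟩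
      · simp [hP0, hP1, hP2, hP3, hP4, hP5, hP6, hT0, hT1, hT2, hT3, hT4, hT5, hT6, Matrix.cons_val_succ, Prod.ext_iff]; omega
      · rintro ⟨k', a', b'⟩ h'
        fin_cases k' <;> simp [hP0, hP1, hP2, hP3, hP4, hP5, hP6, hT0, hT1, hT2, hT3, hT4, hT5, hT6, Matrix.cons_val_succ, Prod.ext_iff] at h' ⊢ <;> omega
    · refine ⟨⟨1, (u.1 - (i+2))/7, (u.2 - (j+1))/7⟩, ?_, ?_⟩
      · simp [hP0, hP1, hP2, hP3, hP4, hP5, hP6, hT0, hT1, hT2, hT3, hT4, hT5, hT6, Matrix.cons_val_succ, Prod.ext_iff]; omega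
      · rintro ⟨k', a', b'⟩ h'
        fin_cases k' <;> simp [hP0, hP1, hP2, hP3, hP4, hP5, hP6, hT0, hT1, hT2, hT3, hT4, hT5, hT6, Matrix.cons_val_succ, Prod.ext_iff] at h' ⊢ <;> omega
    · refine ⟨⟨6, (u.1 - (i-4))/7, (u.2 - (j+5))/7⟩, ?_, ?_⟩
      · simp [hP0, hP1, hP2, hP3, hP4, hP5, hP6, hT0, hT1, hT2, hT3, hT4, hT5, hT6, Matrix.cons_val_succ, Prod.ext_iff]; omega
      · rintro ⟨k', a', b'⟩ h'
        fin_cases k' <;> simp [hP0, hP1, hP2, hP3, hP4, hP5, hP6, hT0, hT1, hT2, hT3, hT4, hT5, hT6, Matrix.cons_val_succ, Prod.ext_iff] at h' ⊢ <;> omega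
    · refine ⟨⟨4, (u.1 - (i-3))/7, (u.2 - (j+2))/7⟩, ?_, ?_⟩
      · simp [hP0, hP1, hP2, hP3, hP4, hP5, hP6, hT0, hT1, hT2, hT3, hT4, hT5, hT6, Matrix.cons_val_succ, Prod.ext_iff]; omega
      · rintro ⟨k', a', b'⟩ h'
        fin_cases k' <;> simp [hP0, hP1, hP2, hP3, hP4, hP5, hP6, hT0, hT1, hT2, hT3, hT4, hT5, hT6, Matrix.cons_val_succ, Prod.ext_iff] at h' ⊢ <;> omega
    · refine ⟨⟨5, (u.1 - (i-2))/7, (u.2 - (j-1))/7⟩, ?_, ?_⟩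
      · simp [hP0, hP1, hP2, hP3, hP4, hP5, hP6, hT0, hT1, hT2, hT3, hT4, hT5, hT6, Matrix.cons_val_succ, Prod.ext_iff]; omega
      · rintro ⟨k', a', b'⟩ h'
        fin_cases k' <;> simp [hP0, hP1, hP2, hP3, hP4, hP5, hP6, hT0, hT1, hT2, hT3, hT4, hT5, hT6, Matrix.cons_val_succ, Prod.ext_iff] at h' ⊢ <;> omega
    · refine ⟨⟨3, (u.1 - (i-1))/7, (u.2 - (j+3))/7⟩, ?_, ?_⟩
      · simp [hP0, hP1, hP2, hP3, hP4, hP5, hP6, hT0, hT1, hT2, hT3, hT4, hT5, hT6, Matrix.cons_val_succ, Prod.ext_iff]; omega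
      · rintro ⟨k', a', b'⟩ h'
        fin_cases k' <;> simp [hP0, hP1, hP2, hP3, hP4, hP5, hP6, hT0, hT1, hT2, hT3, hT4, hT5, hT6, Matrix.cons_val_succ, Prod.ext_iff] at h' ⊢ <;> omega
  · -- translation property
    clear hP0 hP1 hP2 hP3 hP4 hP5 hP6 hT0 hT1 hT2 hT3 hT4 hT5 hT6
    intro k a b
    fin_cases k
    · show fmove i ((i, j) + (7 * a, 7 * b)) = (i + 1, j - 1) + (7 * a, 7 * b)
      simp only [Prod.mk_add_mk]
      unfold fmove
      split_ifs <;> simp [Prod.ext_iff] <;> omega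
    · show fmove i ((i + 2, j + 1) + (7 * a, 7 * b)) = (i + 2, j + 2) + (7 * a, 7 * b)
      simp only [Prod.mk_add_mk]
      unfold fmove
      split_ifs <;> simp [Prod.ext_iff] <;> omega
    · show fmove i ((i + 1, j + 4) + (7 * a, 7 * b)) = (i, j + 3) + (7 * a, 7 * b)
      simp only [Prod.mk_add_mk]
      unfold fmove
      split_ifs <;> simp [Prod.ext_iff] <;> omega
    · show fmove i ((i - 1, j + 3) + (7 * a, 7 * b)) = (i - 2, j + 4) + (7 * a, 7 * b)
      simp only [Prod.mk_add_mk]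
      unfold fmove
      split_ifs <;> simp [Prod.ext_iff] <;> omega
    · show fmove i ((i - 3, j + 2) + (7 * a, 7 * b)) = (i - 3, j + 1) + (7 * a, 7 * b)
      simp only [Prod.mk_add_mk]
      unfold fmove
      split_ifs <;> simp [Prod.ext_iff] <;> omega
    · show fmove i ((i - 2, j - 1) + (7 * a, 7 * b)) = (i - 1, j) + (7 * a, 7 * b)
      simp only [Prod.mk_add_mk]
      unfold fmove
      split_ifs <;> simp [Prod.ext_iff] <;> omega
    · show fmove i ((i - 4, j + 5) + (7 * a, 7 * b)) = (i - 4, j + 5) + (7 * a, 7 * b)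
      simp only [Prod.mk_add_mk]
      unfold fmove
      split_ifs <;> simp [Prod.ext_iff] <;> omega
  · -- MapsTo
    clear hP0 hP1 hP2 hP3 hP4 hP5 hP6 hT0 hT1 hT2 hT3 hT4 hT5 hT6
    intro u hu
    rw [hD] at hu
    rw [hD']
    unfold fmove
    split_ifs <;> (try simp) <;> omega
  · -- InjOn
    clear hP0 hP1 hP2 hP3 hP4 hP5 hP6 hT0 hT1 hT2 hT3 hT4 hT5 hT6
    intro u hu v hv h
    rw [hD] at hu hv
    unfold fmove at h
    split_ifs at h <;> simp only [Prod.mk.injEq, Prod.ext_iff] at h ⊢ <;> omega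
  · -- SurjOn
    clear hP0 hP1 hP2 hP3 hP4 hP5 hP6 hT0 hT1 hT2 hT3 hT4 hT5 hT6
    intro w hw
    rw [hD'] at hw
    have h7 : (w.1 - i) % 7 = 0 ∨ (w.1 - i) % 7 = 1 ∨ (w.1 - i) % 7 = 2 ∨ (w.1 - i) % 7 = 3 ∨
        (w.1 - i) % 7 = 4 ∨ (w.1 - i) % 7 = 5 ∨ (w.1 - i) % 7 = 6 := by omega
    rcases h7 with h|h|h|h|h|h|h
    · exact ⟨(w.1 + 1, w.2 + 1), by rw [hD]; simp; omega,
        by unfold fmove; split_ifs <;> simp_all [Prod.ext_iff] <;> omega⟩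
    · exact ⟨(w.1 - 1, w.2 + 1), by rw [hD]; simp; omega,
        by unfold fmove; split_ifs <;> simp_all [Prod.ext_iff] <;> omega⟩
    · exact ⟨(w.1, w.2 - 1), by rw [hD]; simp; omega,
        by unfold fmove; split_ifs <;> simp_all [Prod.ext_iff] <;> omega⟩
    · exact ⟨w, by rw [hD]; omega,
        by unfold fmove; split_ifs <;> simp_all [Prod.ext_iff] <;> omega⟩
    · exact ⟨(w.1, w.2 + 1), by rw [hD]; simp; omega,
        by unfold fmove; split_ifs <;> simp_all [Prod.ext_iff] <;> omega⟩
    · exact ⟨(w.1 + 1, w.2 - 1), by rw [hD]; simp; omega,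
        by unfold fmove; split_ifs <;> simp_all [Prod.ext_iff] <;> omega⟩
    · exact ⟨(w.1 - 1, w.2 - 1), by rw [hD]; simp; omega,
        by unfold fmove; split_ifs <;> simp_all [Prod.ext_iff] <;> omega⟩
  · -- adjacency
    clear hP0 hP1 hP2 hP3 hP4 hP5 hP6 hT0 hT1 hT2 hT3 hT4 hT5 hT6
    intro u _
    unfold fmove
    split_ifs
    · exact Or.inr ⟨by simp [Prod.ext_iff] <;> omega, by simp [abs_le] <;> omega, by simp [abs_le] <;> omega⟩
    · exact Or.inr ⟨by simp [Prod.ext_iff] <;> omega, by simp [abs_le] <;> omega, by simp [abs_le] <;> omega⟩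
    · exact Or.inr ⟨by simp [Prod.ext_iff] <;> omega, by simp [abs_le] <;> omega, by simp [abs_le] <;> omega⟩
    · exact Or.inr ⟨by simp [Prod.ext_iff] <;> omega, by simp [abs_le] <;> omega, by simp [abs_le] <;> omega⟩
    · exact Or.inr ⟨by simp [Prod.ext_iff] <;> omega, by simp [abs_le] <;> omega, by simp [abs_le] <;> omega⟩
    · exact Or.inr ⟨by simp [Prod.ext_iff] <;> omega, by simp [abs_le] <;> omega, by simp [abs_le] <;> omega⟩
    · exact Or.inl rfl
  · -- attacked vertex
    rw [hD']
    simp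
end

section
/- (Attack at (i+1,j+1), Table 1.) Let c ∈ ℤ/7ℤ and let (i,j) ∈ ℤ × ℤ satisfy 3i + j ≡ c (mod 7), and set c' = (i+1) + 2(j+1) (mod 7). Then: (a) the seven points (i,j), (i+2,j+1), (i+4,j+2), (i+3,j+5), (i+1,j+4), (i−1,j+3), (i−2,j−1) all lie in D_c and, together with all their translates by vectors (7a,7b) with a,b ∈ ℤ, they exhaust D_c, each element of D_c arising exactly once; (b) the map φ that sends, for all a,b ∈ ℤ, (i,j)+(7a,7b) ↦ (i+1,j+1)+(7a,7b), (i+2,j+1)+(7a,7b) ↦ (i+3,j)+(7a,7b), (i+4,j+2)+(7a,7b) ↦ (i+4,j+3)+(7a,7b), (i+3,j+5)+(7a,7b) ↦ (i+2,j+4)+(7a,7b), (i+1,j+4)+(7a,7b) ↦ (i,j+5)+(7a,7b), (i−1,j+3)+(7a,7b) ↦ (i−1,j+2)+(7a,7b), and fixes every translate (i−2,j−1)+(7a,7b) (the anchors), is a well-defined bijection from D_c onto D'_{c'}; (c) every u ∈ D_c satisfies φ(u) = u or φ(u) adjacent to u in G∞; in particular the attacked vertex (i+1,j+1) ∈ D'_{c'}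 is occupied after the move. -/
lemma zmodcast7 (a b : ℤ) : ((a : ZMod 7) = (b : ZMod 7)) ↔ a % 7 = b % 7 := by
  rw [ZMod.intCast_eq_intCast_iff]; exact Iff.rfl

lemma vec7_0 {α : Type*} (a0 a1 a2 a3 a4 a5 a6 : α) : ![a0,a1,a2,a3,a4,a5,a6] (0 : Fin 7) = a0 := rfl
lemma vec7_1 {α : Type*} (a0 a1 a2 a3 a4 a5 a6 : α) : ![a0,a1,a2,a3,a4,a5,a6] (1 : Fin 7) = a1 := rfl
lemma vec7_2 {α : Type*} (a0 a1 a2 a3 a4 a5 a6 : α) : ![a0,a1,a2,a3,a4,a5,a6] (2 : Fin 7) = a2 := rfl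
lemma vec7_3 {α : Type*} (a0 a1 a2 a3 a4 a5 a6 : α) : ![a0,a1,a2,a3,a4,a5,a6] (3 : Fin 7) = a3 := rfl
lemma vec7_4 {α : Type*} (a0 a1 a2 a3 a4 a5 a6 : α) : ![a0,a1,a2,a3,a4,a5,a6] (4 : Fin 7) = a4 := rfl
lemma vec7_5 {α : Type*} (a0 a1 a2 a3 a4 a5 a6 : α) : ![a0,a1,a2,a3,a4,a5,a6] (5 : Fin 7) = a5 := rfl
lemma vec7_6 {α : Type*} (a0 a1 a2 a3 a4 a5 a6 : α) : ![a0,a1,a2,a3,a4,a5,a6] (6 : Fin 7) = a6 := rfl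
lemma vec7m_0 {α : Type*} (a0 a1 a2 a3 a4 a5 a6 : α) (h : 0 < 7) : ![a0,a1,a2,a3,a4,a5,a6] (⟨0, h⟩ : Fin 7) = a0 := rfl
lemma vec7m_1 {α : Type*} (a0 a1 a2 a3 a4 a5 a6 : α) (h : 1 < 7) : ![a0,a1,a2,a3,a4,a5,a6] (⟨1, h⟩ : Fin 7) = a1 := rfl
lemma vec7m_2 {α : Type*} (a0 a1 a2 a3 a4 a5 a6 : α) (h : 2 < 7) : ![a0,a1,a2,a3,a4,a5,a6] (⟨2, h⟩ : Fin 7) = a2 := rfl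
lemma vec7m_3 {α : Type*} (a0 a1 a2 a3 a4 a5 a6 : α) (h : 3 < 7) : ![a0,a1,a2,a3,a4,a5,a6] (⟨3, h⟩ : Fin 7) = a3 := rfl
lemma vec7m_4 {α : Type*} (a0 a1 a2 a3 a4 a5 a6 : α) (h : 4 < 7) : ![a0,a1,a2,a3,a4,a5,a6] (⟨4, h⟩ : Fin 7) = a4 := rfl
lemma vec7m_5 {α : Type*} (a0 a1 a2 a3 a4 a5 a6 : α) (h : 5 < 7) : ![a0,a1,a2,a3,a4,a5,a6] (⟨5, h⟩ : Fin 7) = a5 := rfl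
lemma vec7m_6 {α : Type*} (a0 a1 a2 a3 a4 a5 a6 : α) (h : 6 < 7) : ![a0,a1,a2,a3,a4,a5,a6] (⟨6, h⟩ : Fin 7) = a6 := rfl

def shiftF (i : ℤ) (u : ℤ × ℤ) : ℤ × ℤ :=
  if (u.1 - i) % 7 = 0 then u + (1, 1)
  else if (u.1 - i) % 7 = 2 then u + (1, -1)
  else if (u.1 - i) % 7 = 4 then u + (0, 1)
  else if (u.1 - i) % 7 = 3 then u + (-1, -1)
  else if (u.1 - i) % 7 = 1 then u + (-1, 1)
  else if (u.1 - i) % 7 = 6 then u + (0, -1)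
  else u

lemma shiftF_eval_0 (i x y : ℤ) (h : (x - i) % 7 = 0) : shiftF i (x, y) = (x + 1, y + 1) := by
  simp only [shiftF]; split_ifs <;> simp only [Prod.mk_add_mk, Prod.mk.injEq, true_and, and_true] <;> omega
lemma shiftF_eval_2 (i x y : ℤ) (h : (x - i) % 7 = 2) : shiftF i (x, y) = (x + 1, y - 1) := by
  simp only [shiftF]; split_ifs <;> simp only [Prod.mk_add_mk, Prod.mk.injEq, true_and, and_true] <;> omega
lemma shiftF_eval_4 (i x y : ℤ) (h : (x - i) % 7 = 4) : shiftF i (x, y) = (x, y + 1) := by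
  simp only [shiftF]; split_ifs <;> simp only [Prod.mk_add_mk, Prod.mk.injEq, true_and, and_true] <;> omega
lemma shiftF_eval_3 (i x y : ℤ) (h : (x - i) % 7 = 3) : shiftF i (x, y) = (x - 1, y - 1) := by
  simp only [shiftF]; split_ifs <;> simp only [Prod.mk_add_mk, Prod.mk.injEq, true_and, and_true] <;> omega
lemma shiftF_eval_1 (i x y : ℤ) (h : (x - i) % 7 = 1) : shiftF i (x, y) = (x - 1, y + 1) := by
  simp only [shiftF]; split_ifs <;> simp only [Prod.mk_add_mk, Prod.mk.injEq, true_and, and_true] <;> omega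
lemma shiftF_eval_6 (i x y : ℤ) (h : (x - i) % 7 = 6) : shiftF i (x, y) = (x, y - 1) := by
  simp only [shiftF]; split_ifs <;> simp only [Prod.mk_add_mk, Prod.mk.injEq, true_and, and_true] <;> omega
lemma shiftF_eval_5 (i x y : ℤ) (h : (x - i) % 7 = 5) : shiftF i (x, y) = (x, y) := by
  simp only [shiftF]; split_ifs <;> simp only [Prod.mk_add_mk, Prod.mk.injEq, true_and, and_true] <;> omega

lemma shiftF_maps (i j : ℤ) (u : ℤ × ℤ) (hu : (3 * u.1 + u.2) % 7 = (3 * i + j) % 7) :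
    ((shiftF i u).1 + 2 * (shiftF i u).2) % 7 = ((i + 1) + 2 * (j + 1)) % 7 := by
  simp only [shiftF]
  split_ifs <;> (try simp only [Prod.fst_add, Prod.snd_add]) <;> omega

set_option maxHeartbeats 2000000 in
lemma shiftF_inj (i j : ℤ) (u v : ℤ × ℤ) (hu : (3 * u.1 + u.2) % 7 = (3 * i + j) % 7)
    (hv : (3 * v.1 + v.2) % 7 = (3 * i + j) % 7) (huv : shiftF i u = shiftF i v) : u = v := by
  simp only [shiftF] at huv
  split_ifs at huv <;>
    (rw [Prod.ext_iff] at huv ⊢;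
     (try simp only [Prod.fst_add, Prod.snd_add] at huv); omega)

lemma shiftF_surj (i j : ℤ) (v : ℤ × ℤ)
    (hv : (v.1 + 2 * v.2) % 7 = ((i + 1) + 2 * (j + 1)) % 7) :
    ∃ u : ℤ × ℤ, (3 * u.1 + u.2) % 7 = (3 * i + j) % 7 ∧ shiftF i u = v := by
  obtain ⟨x, y⟩ := v
  simp only at hv ⊢
  have h7 : (x - i) % 7 = 0 ∨ (x - i) % 7 = 1 ∨ (x - i) % 7 = 2 ∨ (x - i) % 7 = 3 ∨
      (x - i) % 7 = 4 ∨ (x - i) % 7 = 5 ∨ (x - i) % 7 = 6 := by omega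
  rcases h7 with h | h | h | h | h | h | h
  · exact ⟨(x + 1, y - 1), by simp only; omega,
      by rw [shiftF_eval_1 i _ _ (by omega)]; simp only [Prod.mk.injEq, true_and, and_true]; omega⟩
  · exact ⟨(x - 1, y - 1), by simp only; omega,
      by rw [shiftF_eval_0 i _ _ (by omega)]; simp only [Prod.mk.injEq, true_and, and_true]; omega⟩
  · exact ⟨(x + 1, y + 1), by simp only; omega,
      by rw [shiftF_eval_3 i _ _ (by omega)]; simp only [Prod.mk.injEq, true_and, and_true]; omega⟩
  · exact ⟨(x - 1, y + 1), by simp only; omega,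
      by rw [shiftF_eval_2 i _ _ (by omega)]; simp only [Prod.mk.injEq, true_and, and_true]; omega⟩
  · exact ⟨(x, y - 1), by simp only; omega,
      by rw [shiftF_eval_4 i _ _ (by omega)]; simp only [Prod.mk.injEq, true_and, and_true]; omega⟩
  · exact ⟨(x, y), by simp only; omega,
      by rw [shiftF_eval_5 i _ _ (by omega)]⟩
  · exact ⟨(x, y + 1), by simp only; omega,
      by rw [shiftF_eval_6 i _ _ (by omega)]; simp only [Prod.mk.injEq, true_and, and_true]; omega⟩

lemma shiftF_move (i : ℤ) (u : ℤ × ℤ) :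
    shiftF i u = u ∨ (u ≠ shiftF i u ∧ |u.1 - (shiftF i u).1| ≤ 1 ∧ |u.2 - (shiftF i u).2| ≤ 1) := by
  simp only [shiftF]
  split_ifs <;>
    first
      | (left; rfl)
      | (right;
         refine ⟨?_, ?_, ?_⟩
         · rw [Ne, Prod.ext_iff]; simp only [Prod.fst_add, Prod.snd_add]; omega
         · simp only [Prod.fst_add, Prod.snd_add]; rw [abs_le]; omega
         · simp only [Prod.fst_add, Prod.snd_add]; rw [abs_le]; omega)

lemma decomp_uniq (i j : ℤ) (u : ℤ × ℤ) (q q' : Fin 7 × ℤ × ℤ)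
    (h1 : u = ![(i, j), (i + 2, j + 1), (i + 4, j + 2), (i + 3, j + 5), (i + 1, j + 4), (i - 1, j + 3), (i - 2, j - 1)] q.1 + (7 * q.2.1, 7 * q.2.2))
    (h2 : u = ![(i, j), (i + 2, j + 1), (i + 4, j + 2), (i + 3, j + 5), (i + 1, j + 4), (i - 1, j + 3), (i - 2, j - 1)] q'.1 + (7 * q'.2.1, 7 * q'.2.2)) :
    q' = q := by
  obtain ⟨k, a, b⟩ := q
  obtain ⟨k', a', b'⟩ := q'
  fin_cases k <;> fin_cases k' <;>
    (simp only [vec7_0, vec7_1, vec7_2, vec7_3, vec7_4, vec7_5, vec7_6,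
       vec7m_0, vec7m_1, vec7m_2, vec7m_3, vec7m_4, vec7m_5, vec7m_6,
       Prod.mk_add_mk, Prod.ext_iff] at h1 h2;
     first
       | (exfalso; omega)
       | (exact Prod.ext_iff.mpr ⟨rfl, Prod.ext_iff.mpr ⟨show a' = a by omega, show b' = b by omega⟩⟩))

lemma decomp (i j : ℤ) (u : ℤ × ℤ) (hu : (3 * u.1 + u.2) % 7 = (3 * i + j) % 7) :
    ∃! q : Fin 7 × ℤ × ℤ,
      u = ![(i, j), (i + 2, j + 1), (i + 4, j + 2), (i + 3, j + 5), (i + 1, j + 4), (i - 1, j + 3), (i - 2, j - 1)] q.1 + (7 * q.2.1, 7 * q.2.2) := by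
  have h7 : (u.1 - i) % 7 = 0 ∨ (u.1 - i) % 7 = 1 ∨ (u.1 - i) % 7 = 2 ∨ (u.1 - i) % 7 = 3 ∨
      (u.1 - i) % 7 = 4 ∨ (u.1 - i) % 7 = 5 ∨ (u.1 - i) % 7 = 6 := by omega
  rcases h7 with h | h | h | h | h | h | h
  · exact ⟨⟨0, (u.1 - i) / 7, (u.2 - j) / 7⟩,
      by simp only [vec7_0, Prod.mk_add_mk, Prod.ext_iff]; omega,
      fun q hq => decomp_uniq i j u _ q (by simp only [vec7_0, Prod.mk_add_mk, Prod.ext_iff]; omega) hq⟩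
  · exact ⟨⟨4, (u.1 - (i+1)) / 7, (u.2 - (j+4)) / 7⟩,
      by simp only [vec7_4, Prod.mk_add_mk, Prod.ext_iff]; omega,
      fun q hq => decomp_uniq i j u _ q (by simp only [vec7_4, Prod.mk_add_mk, Prod.ext_iff]; omega) hq⟩
  · exact ⟨⟨1, (u.1 - (i+2)) / 7, (u.2 - (j+1)) / 7⟩,
      by simp only [vec7_1, Prod.mk_add_mk, Prod.ext_iff]; omega,
      fun q hq => decomp_uniq i j u _ q (by simp only [vec7_1, Prod.mk_add_mk, Prod.ext_iff]; omega) hq⟩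
  · exact ⟨⟨3, (u.1 - (i+3)) / 7, (u.2 - (j+5)) / 7⟩,
      by simp only [vec7_3, Prod.mk_add_mk, Prod.ext_iff]; omega,
      fun q hq => decomp_uniq i j u _ q (by simp only [vec7_3, Prod.mk_add_mk, Prod.ext_iff]; omega) hq⟩
  · exact ⟨⟨2, (u.1 - (i+4)) / 7, (u.2 - (j+2)) / 7⟩,
      by simp only [vec7_2, Prod.mk_add_mk, Prod.ext_iff]; omega,
      fun q hq => decomp_uniq i j u _ q (by simp only [vec7_2, Prod.mk_add_mk, Prod.ext_iff]; omega) hq⟩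
  · exact ⟨⟨6, (u.1 - (i-2)) / 7, (u.2 - (j-1)) / 7⟩,
      by simp only [vec7_6, Prod.mk_add_mk, Prod.ext_iff]; omega,
      fun q hq => decomp_uniq i j u _ q (by simp only [vec7_6, Prod.mk_add_mk, Prod.ext_iff]; omega) hq⟩
  · exact ⟨⟨5, (u.1 - (i-1)) / 7, (u.2 - (j+3)) / 7⟩,
      by simp only [vec7_5, Prod.mk_add_mk, Prod.ext_iff]; omega,
      fun q hq => decomp_uniq i j u _ q (by simp only [vec7_5, Prod.mk_add_mk, Prod.ext_iff]; omega) hq⟩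

/-- Table 1, attack at `(i+1, j+1)`: the seven listed guards (the last being the anchor) and their
translates by `(7a,7b)` tile `D_c` exactly; the indicated moves define a bijection
`f : D_c → D'_{c'}` with `c' = (i + 1) + 2 * (j + 1) (mod 7)`, each guard staying in place or moving to an
adjacent vertex, and the attacked vertex `(i+1, j+1)` lies in `D'_{c'}`, hence is occupied. -/
theorem attack_diag_up (c : ZMod 7) (i j : ℤ)
    (hij : ((3 * i + j : ℤ) : ZMod 7) = c)
    (pts tgt : Fin 7 → ℤ × ℤ)
    (hpts : pts = ![(i, j), (i + 2, j + 1), (i + 4, j + 2), (i + 3, j + 5), (i + 1, j + 4), (i - 1, j + 3), (i - 2, j - 1)])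
    (htgt : tgt = ![(i + 1, j + 1), (i + 3, j), (i + 4, j + 3), (i + 2, j + 4), (i, j + 5), (i - 1, j + 2), (i - 2, j - 1)]) :
    (∀ k : Fin 7, pts k ∈ Dset c) ∧
    (∀ u ∈ Dset c, ∃! q : Fin 7 × ℤ × ℤ, u = pts q.1 + (7 * q.2.1, 7 * q.2.2)) ∧
    ∃ f : ℤ × ℤ → ℤ × ℤ,
      (∀ k : Fin 7, ∀ a b : ℤ, f (pts k + (7 * a, 7 * b)) = tgt k + (7 * a, 7 * b)) ∧
      Set.BijOn f (Dset c) (D'set (((i + 1) + 2 * (j + 1) : ℤ) : ZMod 7)) ∧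
      (∀ u ∈ Dset c, f u = u ∨ strongGridInf.Adj u (f u)) ∧
      ((i + 1, j + 1)) ∈ D'set (((i + 1) + 2 * (j + 1) : ℤ) : ZMod 7) := by
  subst hij
  have hmemD : ∀ u : ℤ × ℤ, u ∈ Dset ((3 * i + j : ℤ) : ZMod 7) ↔
      (3 * u.1 + u.2) % 7 = (3 * i + j) % 7 := by
    intro u; simp only [Dset, Set.mem_setOf_eq, zmodcast7]
  have hmemD' : ∀ u : ℤ × ℤ, u ∈ D'set (((i + 1) + 2 * (j + 1) : ℤ) : ZMod 7) ↔
      (u.1 + 2 * u.2) % 7 = ((i + 1) + 2 * (j + 1)) % 7 := by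
    intro u; simp only [D'set, Set.mem_setOf_eq, zmodcast7]
  subst hpts htgt
  refine ⟨?_, ?_, shiftF i, ?_, ⟨?_, ?_, ?_⟩, ?_, ?_⟩
  · -- each pts k in Dset
    intro k
    fin_cases k <;>
      simp only [vec7_0, vec7_1, vec7_2, vec7_3, vec7_4, vec7_5, vec7_6,
        vec7m_0, vec7m_1, vec7m_2, vec7m_3, vec7m_4, vec7m_5, vec7m_6] <;>
      rw [hmemD] <;> omega
  · -- unique decomposition
    intro u hu
    rw [hmemD] at hu
    exact decomp i j u hu
  · -- f on representatives
    intro k a b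
    fin_cases k
    · simp only [vec7_0, vec7m_0, Prod.mk_add_mk]
      rw [shiftF_eval_0 _ _ _ (by omega)]
      simp only [Prod.mk.injEq, true_and, and_true]; try omega
    · simp only [vec7_1, vec7m_1, Prod.mk_add_mk]
      rw [shiftF_eval_2 _ _ _ (by omega)]
      simp only [Prod.mk.injEq, true_and, and_true]; try omega
    · simp only [vec7_2, vec7m_2, Prod.mk_add_mk]
      rw [shiftF_eval_4 _ _ _ (by omega)]
      simp only [Prod.mk.injEq, true_and, and_true]; try omega
    · simp only [vec7_3, vec7m_3, Prod.mk_add_mk]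
      rw [shiftF_eval_3 _ _ _ (by omega)]
      simp only [Prod.mk.injEq, true_and, and_true]; try omega
    · simp only [vec7_4, vec7m_4, Prod.mk_add_mk]
      rw [shiftF_eval_1 _ _ _ (by omega)]
      simp only [Prod.mk.injEq, true_and, and_true]; try omega
    · simp only [vec7_5, vec7m_5, Prod.mk_add_mk]
      rw [shiftF_eval_6 _ _ _ (by omega)]
      simp only [Prod.mk.injEq, true_and, and_true]; try omega
    · simp only [vec7_6, vec7m_6, Prod.mk_add_mk]
      rw [shiftF_eval_5 _ _ _ (by omega)]
  · -- MapsTo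
    intro u hu
    rw [hmemD] at hu
    rw [hmemD']
    exact shiftF_maps i j u hu
  · -- InjOn
    intro u hu v hv huv
    rw [hmemD] at hu hv
    exact shiftF_inj i j u v hu hv huv
  · -- SurjOn
    intro v hv
    rw [hmemD'] at hv
    obtain ⟨u, hu, hfu⟩ := shiftF_surj i j v hv
    exact ⟨u, (hmemD u).mpr hu, hfu⟩
  · -- move to adjacent or stay
    intro u _
    rcases shiftF_move i u with h | ⟨h1, h2, h3⟩
    · exact Or.inl h
    · exact Or.inr ⟨h1, h2, h3⟩
  · -- attacked vertex occupied
    rw [hmemD']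
end

section
/- For every integer n ≥ 1, there exists an eternal domination family for the strong grid P₂ ⊠ Pₙ (two rows of n vertices) all of whose members have cardinality ⌈n/2⌉; in particular γ∞_all(P₂ ⊠ Pₙ) ≤ ⌈n/2⌉. (One guard assigned to each 2×2 block {2k,2k+1} × {0,1} of the partition of the two rows into disjoint copies of K₄, plus one guard for a final 2×1 block when n is odd, suffices.) -/
/-- The strong grid `Pₙ ⊠ Pₘ` on vertex set `{0,…,n−1} × {0,…,m−1}`: distinct vertices
are adjacent iff both coordinates differ by at most 1. -/
def strongGrid (n m : ℕ) : SimpleGraph (Fin n × Fin m) where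
  Adj p q := p ≠ q ∧ |(p.1 : ℤ) - (q.1 : ℤ)| ≤ 1 ∧ |(p.2 : ℤ) - (q.2 : ℤ)| ≤ 1
  symm := by
    refine ⟨?_⟩
    intro p q h
    exact ⟨h.1.symm, by rw [abs_sub_comm]; exact h.2.1, by rw [abs_sub_comm]; exact h.2.2⟩
  loopless := by
    refine ⟨?_⟩
    intro p h
    exact h.1 rfl

/-- For every `n ≥ 1`, the strong grid `P₂ ⊠ Pₙ` (two rows of `n` vertices) admits an
eternal domination family all of whose members have cardinality `⌈n/2⌉`; in particular
`γ∞_all(P₂ ⊠ Pₙ) ≤ ⌈n/2⌉`. -/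
theorem eternal_domination_two_rows (n : ℕ) (hn : 1 ≤ n) :
    ∃ F : Set (Set (Fin 2 × Fin n)), IsEternalDomFamily (strongGrid 2 n) F ∧
      ∀ C ∈ F, C.ncard = (n + 1) / 2 := by
  classical
  set m := (n + 1) / 2 with hm
  -- adjacency of two distinct vertices in the same block
  have adj : ∀ p q : Fin 2 × Fin n, p ≠ q → (p.2 : ℕ) / 2 = (q.2 : ℕ) / 2 →
      (strongGrid 2 n).Adj p q := by
    intro p q hne hblk
    refine ⟨hne, ?_, ?_⟩
    · have h1 : (p.1 : ℕ) < 2 := p.1.isLt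
      have h2 : (q.1 : ℕ) < 2 := q.1.isLt
      rw [abs_le]; constructor <;> push_cast <;> omega
    · rw [abs_le]; constructor <;> push_cast <;> omega
  have hinj : ∀ f : Fin m → Fin 2 × Fin n, (∀ k, ((f k).2 : ℕ) / 2 = (k : ℕ)) →
      Function.Injective f := by
    intro f hf k1 k2 he
    have := hf k1
    rw [he, hf k2] at this
    exact Fin.ext this.symm
  refine ⟨{S | ∃ f : Fin m → Fin 2 × Fin n, (∀ k, ((f k).2 : ℕ) / 2 = (k : ℕ)) ∧
      S = Set.range f}, ⟨?_, ?_, ?_⟩, ?_⟩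
  · -- nonempty
    refine ⟨Set.range (fun k : Fin m => ((0 : Fin 2), ⟨2 * (k : ℕ), by omega⟩)),
      fun k : Fin m => ((0 : Fin 2), ⟨2 * (k : ℕ), by omega⟩), fun k => ?_, rfl⟩
    simp
  · -- dominating
    rintro C ⟨f, hf, rfl⟩ v
    have hv : ((v.2 : ℕ)) / 2 < m := by have := v.2.isLt; omega
    by_cases hvf : v = f ⟨(v.2 : ℕ) / 2, hv⟩
    · exact Or.inl ⟨_, hvf.symm⟩
    · exact Or.inr ⟨f ⟨(v.2 : ℕ) / 2, hv⟩, ⟨_, rfl⟩, adj _ _ hvf (hf ⟨(v.2 : ℕ) / 2, hv⟩).symm⟩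
  · -- eternal
    rintro C ⟨f, hf, rfl⟩ v
    have hv : ((v.2 : ℕ)) / 2 < m := by have := v.2.isLt; omega
    set k0 : Fin m := ⟨(v.2 : ℕ) / 2, hv⟩ with hk0
    set f' := Function.update f k0 v with hf'def
    have hf' : ∀ k, ((f' k).2 : ℕ) / 2 = (k : ℕ) := by
      intro k
      by_cases h : k = k0
      · subst h; simp [hf'def, hk0]
      · simp [hf'def, Function.update_of_ne h]; exact hf k
    refine ⟨Set.range f', ⟨f', hf', rfl⟩, ⟨k0, by simp [hf'def]⟩, ?_⟩
    refine ⟨(Equiv.ofInjective f (hinj f hf)).symm.trans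
      (Equiv.ofInjective f' (hinj f' hf')), ?_⟩
    intro u
    set k := (Equiv.ofInjective f (hinj f hf)).symm u with hk
    have hu : f k = (u : Fin 2 × Fin n) := by
      have := (Equiv.ofInjective f (hinj f hf)).apply_symm_apply u
      exact congrArg Subtype.val this
    have hphi : ((((Equiv.ofInjective f (hinj f hf)).symm.trans
        (Equiv.ofInjective f' (hinj f' hf'))) u : Set.range f') : Fin 2 × Fin n) = f' k := rfl
    rw [hphi]
    by_cases h : k = k0
    · rw [h] at hu ⊢
      by_cases he : f' k0 = (u : Fin 2 × Fin n)
      · exact Or.inl he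
      · refine Or.inr (adj _ _ (fun hh => he hh.symm) ?_)
        rw [← hu, hf' k0, hf k0]
    · left
      rw [hf'def, Function.update_of_ne h, hu]
  · -- cardinality
    rintro C ⟨f, hf, rfl⟩
    rw [← Set.image_univ, Set.ncard_image_of_injective _ (hinj f hf), Set.ncard_univ,
      Nat.card_eq_fintype_card, Fintype.card_fin]
end
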